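/- Let (𝓔ₙ⁰)_{n∈ℕ} be a sequence of collections of rectangles for a homeomorphism R of a compact manifold M, satisfying hypotheses A₁ and A₃ and such that the graph 𝓖(𝓔₀⁰) has no edge, and let (Mₙ)_{n≥1} be a sequence of homeomorphisms of M satisfying hypotheses B₁, B₂ and B₃. Then: (1) the sequence (Ψₙ) converges uniformly to a continuous map Ψ : M → M (in general non-invertible); (2) the sequence (gₙ) converges uniformly to a homeomorphism g of M, and (gₙ⁻¹) converges uniformly to g⁻¹; (3) g is a topological extension of R: R ∘ Ψ = Ψ ∘ g. -/

import Mathlib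

open Set Function MeasureTheory Topology Filter

noncomputable section

variable {M : Type*}

section Defs
variable [TopologicalSpace M]

/-- A rectangle of `M`: a subset homeomorphic to the closed unit ball of `ℝ^d`. -/
def IsRectangle (d : ℕ) (X : Set M) : Prop :=
  Nonempty (X ≃ₜ (Metric.closedBall (0 : EuclideanSpace ℝ (Fin d)) 1 :
    Set (EuclideanSpace ℝ (Fin d))))

/-- A collection of rectangles: a finite family of pairwise disjoint rectangles. -/
def IsRectCollection (d : ℕ) (𝓔 : Set (Set M)) : Prop :=
  𝓔.Finite ∧ (∀ X ∈ 𝓔, IsRectangle d X) ∧ 𝓔.Pairwise Disjoint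

/-- The union `E` of the rectangles of a collection `𝓔`. -/
def collUnion (𝓔 : Set (Set M)) : Set M := ⋃₀ 𝓔

/-- The collection `𝓔ⁿ = ⋃_{|k| ≤ n} R^k(𝓔)`. -/
def iterColl (R : M ≃ₜ M) (𝓔 : Set (Set M)) (n : ℕ) : Set (Set M) :=
  {Y | ∃ k : ℤ, |k| ≤ (n : ℤ) ∧ ∃ X ∈ 𝓔, Y = (R.toEquiv ^ k) '' X}

/-- `𝓔` is `p` times iterable. -/
def IterableColl (R : M ≃ₜ M) (𝓔 : Set (Set M)) (p : ℕ) : Prop :=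
  ∀ X ∈ 𝓔, ∀ X' ∈ 𝓔, ∀ k l : ℤ, |k| ≤ (p : ℤ) → |l| ≤ (p : ℤ) →
    Disjoint ((R.toEquiv ^ k) '' X) ((R.toEquiv ^ l) '' X') ∨
      (R.toEquiv ^ k) '' X = (R.toEquiv ^ l) '' X'

/-- The oriented graph `𝓖(𝓔)` (vertices the elements of `𝓔`, an edge from `X` to `R(X)`)
has no cycle. -/
def HasNoCycle (R : M ≃ₜ M) (𝓔 : Set (Set M)) : Prop :=
  ¬ ∃ (X : Set M) (p : ℕ), X ∈ 𝓔 ∧ 1 ≤ p ∧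
      (∀ i : ℕ, i ≤ p → (R.toEquiv ^ (i : ℤ)) '' X ∈ 𝓔) ∧ (R.toEquiv ^ (p : ℤ)) '' X = X

/-- The oriented graph `𝓖(𝓔)` has no edge. -/
def EdgelessGraph (R : M ≃ₜ M) (𝓔 : Set (Set M)) : Prop :=
  ∀ X ∈ 𝓔, (R : M → M) '' X ∉ 𝓔

/-- `𝓕` refines `𝓔`. -/
def Refines (𝓕 𝓔 : Set (Set M)) : Prop :=
  (∀ X ∈ 𝓔, ∃ Y ∈ 𝓕, Y ⊆ X) ∧
    ∀ X ∈ 𝓔, ∀ Y ∈ 𝓕, Disjoint X Y ∨ Y ⊆ interior X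

/-- `𝓕` is compatible with `𝓔` for `p` iterates. -/
def CompatibleFor (R : M ≃ₜ M) (𝓕 𝓔 : Set (Set M)) (p : ℕ) : Prop :=
  collUnion 𝓕 ⊆ collUnion 𝓔 ∧
    ∀ k : ℤ, |k| ≤ 2 * (p : ℤ) + 1 →
      (R.toEquiv ^ k) '' collUnion 𝓕 ∩ collUnion 𝓔 ⊆ collUnion 𝓕

/-- Hypothesis A₁. -/
def HypA1 (R : M ≃ₜ M) (𝓔 : ℕ → Set (Set M)) : Prop :=
  (∀ n, IterableColl R (𝓔 n) (n + 1) ∧ HasNoCycle R (iterColl R (𝓔 n) n)) ∧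
  (∀ m n, m < n → Refines (iterColl R (𝓔 n) (n + 1)) (iterColl R (𝓔 m) (m + 1))) ∧
  (∀ n, CompatibleFor R (𝓔 (n + 1)) (𝓔 n) (n + 1))

/-- Hypothesis A₂ (no isolated point). -/
def HypA2 (𝓔 : ℕ → Set (Set M)) : Prop :=
  ∀ n, ∀ X ∈ 𝓔 n, ∃ Y ∈ 𝓔 (n + 1), ∃ Z ∈ 𝓔 (n + 1), Y ≠ Z ∧ Y ⊆ X ∧ Z ⊆ X

/-- The set `K = ⋂ₙ Eₙ⁰`. -/
def limitK (𝓔 : ℕ → Set (Set M)) : Set M := ⋂ n, collUnion (𝓔 n)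

/-- `Ψₙ = Mₙ ∘ ⋯ ∘ M₁`, `Ψ₀ = id`. -/
def Psi (Mseq : ℕ → M ≃ₜ M) : ℕ → M ≃ₜ M
  | 0 => Homeomorph.refl M
  | n + 1 => (Psi Mseq n).trans (Mseq (n + 1))

/-- `gₙ = Ψₙ⁻¹ ∘ R ∘ Ψₙ`. -/
def gSeq (R : M ≃ₜ M) (Mseq : ℕ → M ≃ₜ M) (n : ℕ) : M ≃ₜ M :=
  ((Psi Mseq n).trans R).trans (Psi Mseq n).symm

/-- The support of a homeomorphism. -/
def homeoSupport (f : M ≃ₜ M) : Set M := closure {x | f x ≠ x}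

/-- Hypothesis B₁ (support). -/
def HypB1 (R : M ≃ₜ M) (𝓔 : ℕ → Set (Set M)) (Mseq : ℕ → M ≃ₜ M) : Prop :=
  ∀ n : ℕ, homeoSupport (Mseq (n + 1)) ⊆ collUnion (iterColl R (𝓔 n) n)

/-- Hypothesis B₂ (commutation). -/
def HypB2 (R : M ≃ₜ M) (𝓔 : ℕ → Set (Set M)) (Mseq : ℕ → M ≃ₜ M) : Prop :=
  ∀ n : ℕ, ∀ X ∈ iterColl R (𝓔 n) n, (R : M → M) '' X ∈ iterColl R (𝓔 n) n →
    ∀ x ∈ X, Mseq (n + 1) (R x) = R (Mseq (n + 1) x)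

end Defs

section MetricDefs
variable [MetricSpace M]

/-- Hypothesis A₃ (decay of the collections of rectangles). -/
def HypA3 (R : M ≃ₜ M) (𝓔 : ℕ → Set (Set M)) : Prop :=
  ∀ ε : ℝ, 0 < ε → ∃ N : ℕ, ∀ n ≥ N, ∀ X ∈ iterColl R (𝓔 n) n, Metric.diam X ≤ ε

/-- Hypothesis B₃ (convergence). -/
def HypB3 (R : M ≃ₜ M) (𝓔 : ℕ → Set (Set M)) (Mseq : ℕ → M ≃ₜ M) : Prop :=
  ∀ ε : ℝ, 0 < ε → ∃ N : ℕ, ∀ n ≥ N,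
    ∀ X ∈ iterColl R (𝓔 (n + 1)) (n + 2) \ iterColl R (𝓔 (n + 1)) n,
      Metric.diam ((Psi Mseq n) ⁻¹' X) ≤ ε

/-- Hypothesis B₄ (fibres are thin): the internal radius of `Ψₙ⁻¹(Eₙ⁰)` tends to `0`. -/
def HypB4 (𝓔 : ℕ → Set (Set M)) (Mseq : ℕ → M ≃ₜ M) : Prop :=
  ∀ ε : ℝ, 0 < ε → ∃ N : ℕ, ∀ n ≥ N, ∀ (x : M) (r : ℝ),
    Metric.ball x r ⊆ (Psi Mseq n) ⁻¹' collUnion (𝓔 n) → r ≤ ε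

end MetricDefs

section TopDefs
variable [TopologicalSpace M]

/-- A Cantor set in `M`. -/
def IsCantorSet (K : Set M) : Prop :=
  K.Nonempty ∧ IsCompact K ∧ Perfect K ∧ IsTotallyDisconnected K

/-- A totally disconnected compact set is tamely embedded if it admits arbitrarily small
neighbourhoods that are finite unions of pairwise disjoint rectangles. -/
def TamelyEmbedded (d : ℕ) (Q : Set M) : Prop :=
  ∀ U : Set M, IsOpen U → Q ⊆ U →
    ∃ 𝓑 : Set (Set M), IsRectCollection d 𝓑 ∧ Q ⊆ interior (collUnion 𝓑) ∧ collUnion 𝓑 ⊆ U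

/-- A Cantor set is dynamically coherent for `R`. -/
def DynamicallyCoherent (R : M ≃ₜ M) (K : Set M) : Prop :=
  (∀ k : ℤ, ∃ U : Set M, IsOpen U ∧ (R.toEquiv ^ k) '' K ∩ K = U ∩ K) ∧
  ∀ p : ℕ, ∀ x ∈ K,
    (∃ k : ℕ, 1 ≤ k ∧ ∀ i : ℕ, k ≤ i → i ≤ k + p → (R.toEquiv ^ (i : ℤ)) x ∉ K) ∧
    (∃ l : ℕ, 1 ≤ l ∧ ∀ i : ℕ, l ≤ i → i ≤ l + p → (R.toEquiv ^ (-(i : ℤ))) x ∉ K)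

/-- A Cantor set is dynamically meagre for `R`: it has empty interior in
`Λ = Cl(⋃ᵢ Rⁱ(K))`. -/
def DynamicallyMeagre (R : M ≃ₜ M) (K : Set M) : Prop :=
  ∀ U : Set M, IsOpen U → U ∩ closure (⋃ i : ℤ, (R.toEquiv ^ i) '' K) ⊆ K →
    U ∩ closure (⋃ i : ℤ, (R.toEquiv ^ i) '' K) = ∅

/-- `R` is minimal on the invariant set `Λ` (every orbit of a point of `Λ` is dense in `Λ`). -/
def MinimalOnSet (R : M ≃ₜ M) (Λ : Set M) : Prop :=
  ∀ x ∈ Λ, Λ ⊆ closure (Set.range fun n : ℤ => (R.toEquiv ^ n) x)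

/-- `R` is transitive on the invariant set `Λ` (some orbit is dense in `Λ`). -/
def TransitiveOnSet (R : M ≃ₜ M) (Λ : Set M) : Prop :=
  ∃ x ∈ Λ, Λ ⊆ closure (Set.range fun n : ℤ => (R.toEquiv ^ n) x)

end TopDefs

/-- The support of a measure. -/
def measSupport {M : Type*} [TopologicalSpace M] [MeasurableSpace M] (μ : Measure M) : Set M :=
  {x | ∀ U : Set M, IsOpen U → x ∈ U → 0 < μ U}

/-- The measurable dynamical system `S` restricted to the `S`-invariant set `A` is isomorphic
to the system `T` restricted to the `T`-invariant set `B`, in the sense of Béguin–Crovisier–Le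
Roux: there are full invariant subsets `X₀ ⊆ A`, `Y₀ ⊆ B` and a bijective bimeasurable
conjugacy between them. -/
def MeasIsoOn {X Y : Type*} [MeasurableSpace X] [MeasurableSpace Y]
    (S : X → X) (A : Set X) (T : Y → Y) (B : Set Y) : Prop :=
  ∃ (X₀ : Set X) (Y₀ : Set Y) (Θ : X → Y),
    X₀ ⊆ A ∧ Y₀ ⊆ B ∧ MeasurableSet X₀ ∧ MeasurableSet Y₀ ∧
    S '' X₀ = X₀ ∧ T '' Y₀ = Y₀ ∧
    (∀ μ : Measure X, IsProbabilityMeasure μ → Measure.map S μ = μ → μ A = 1 → μ X₀ = 1) ∧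
    (∀ ν : Measure Y, IsProbabilityMeasure ν → Measure.map T ν = ν → ν B = 1 → ν Y₀ = 1) ∧
    Set.BijOn Θ X₀ Y₀ ∧
    (∀ V : Set Y, MeasurableSet V → MeasurableSet (X₀ ∩ Θ ⁻¹' V)) ∧
    (∀ U : Set X, MeasurableSet U → MeasurableSet (Θ '' (X₀ ∩ U))) ∧
    (∀ x ∈ X₀, Θ (S x) = T (Θ x))



section ZPowHelpers
variable [TopologicalSpace M] (R : M ≃ₜ M)

theorem zpow_continuous (k : ℤ) : Continuous ⇑(R.toEquiv ^ k) := by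
  induction k using Int.induction_on with
  | zero => simp only [zpow_zero]; exact continuous_id
  | succ n ih =>
      have : (R.toEquiv ^ ((n : ℤ) + 1)) = (R.toEquiv ^ (n : ℤ)) * R.toEquiv := by
        rw [zpow_add, zpow_one]
      rw [this]
      simpa [Equiv.Perm.coe_mul] using ih.comp R.continuous
  | pred n ih =>
      have : (R.toEquiv ^ (-(n : ℤ) - 1)) = (R.toEquiv ^ (-(n : ℤ))) * R.toEquiv⁻¹ := by
        rw [sub_eq_add_neg, zpow_add, zpow_neg_one]
      rw [this]
      have hsymm : ⇑(R.toEquiv⁻¹) = ⇑R.symm := rfl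
      simpa [Equiv.Perm.coe_mul, hsymm] using ih.comp R.symm.continuous

theorem zpow_image_add (a b : ℤ) (s : Set M) :
    (R.toEquiv ^ (a + b)) '' s = (R.toEquiv ^ a) '' ((R.toEquiv ^ b) '' s) := by
  rw [zpow_add, ← Set.image_comp]
  rfl

theorem image_R_zpow (k : ℤ) (s : Set M) :
    ⇑R '' ((R.toEquiv ^ k) '' s) = (R.toEquiv ^ (k + 1)) '' s := by
  rw [add_comm, zpow_image_add, zpow_one]
  rfl

theorem image_Rsymm_zpow (k : ℤ) (s : Set M) :
    ⇑R.symm '' ((R.toEquiv ^ k) '' s) = (R.toEquiv ^ (k - 1)) '' s := by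
  rw [sub_eq_add_neg, add_comm, zpow_image_add, zpow_neg_one]
  rfl

theorem zpow_zero_image (s : Set M) : (R.toEquiv ^ (0 : ℤ)) '' s = s := by
  simp

end ZPowHelpers

section SupportHelpers
variable [TopologicalSpace M]

theorem mem_homeoSupport_of_moved {f : M ≃ₜ M} {x : M} (h : f x ≠ x) :
    x ∈ homeoSupport f := subset_closure h

theorem moved_apply_ne {f : M ≃ₜ M} {x : M} (h : f x ≠ x) : f (f x) ≠ f x :=
  fun hc => h (f.injective hc)

theorem apply_eq_of_not_mem_homeoSupport {f : M ≃ₜ M} {x : M}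
    (h : x ∉ homeoSupport f) : f x = x := by
  by_contra hc
  exact h (mem_homeoSupport_of_moved hc)

theorem homeoSupport_symm (f : M ≃ₜ M) : homeoSupport f.symm = homeoSupport f := by
  have h : {x | f.symm x ≠ x} = {x | f x ≠ x} := by
    ext x
    constructor
    · intro h hc
      have h2 : f.symm x = f.symm (f x) := by rw [hc]
      rw [f.symm_apply_apply] at h2
      exact h h2
    · intro h hc
      have h2 : f x = f (f.symm x) := by rw [hc]
      rw [f.apply_symm_apply] at h2
      exact h h2
  unfold homeoSupport
  rw [h]

theorem symm_apply_eq_of_not_mem_homeoSupport {f : M ≃ₜ M} {x : M}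
    (h : x ∉ homeoSupport f) : f.symm x = x :=
  apply_eq_of_not_mem_homeoSupport (by rw [homeoSupport_symm]; exact h)

end SupportHelpers

section RectHelpers
variable [TopologicalSpace M]

theorem IsRectangle.props {d : ℕ} {X : Set M} (hX : IsRectangle d X) :
    IsCompact X ∧ IsPreconnected X ∧ X.Nonempty := by
  obtain ⟨e⟩ := hX
  have hball : IsCompact (Metric.closedBall (0 : EuclideanSpace ℝ (Fin d)) 1) :=
    isCompact_closedBall _ _
  haveI : CompactSpace (Metric.closedBall (0 : EuclideanSpace ℝ (Fin d)) 1) :=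
    isCompact_iff_compactSpace.mp hball
  haveI : CompactSpace X := e.symm.compactSpace
  have hpc : IsPreconnected (Metric.closedBall (0 : EuclideanSpace ℝ (Fin d)) 1) :=
    (convex_closedBall _ _).isPreconnected
  haveI : PreconnectedSpace (Metric.closedBall (0 : EuclideanSpace ℝ (Fin d)) 1) :=
    isPreconnected_iff_preconnectedSpace.mp hpc
  have hXeq : X = range (fun y => ((e.symm y : X) : M)) := by
    have : (fun y => ((e.symm y : X) : M)) = (Subtype.val) ∘ ⇑e.symm := rfl
    rw [this, range_comp, e.symm.surjective.range_eq, image_univ, Subtype.range_coe]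
  refine ⟨?_, ?_, ?_⟩
  · exact isCompact_iff_compactSpace.mpr ‹CompactSpace X›
  · rw [hXeq]
    exact isPreconnected_range (continuous_subtype_val.comp e.symm.continuous)
  · rw [hXeq]
    exact ⟨_, mem_range_self (⟨0, Metric.mem_closedBall_self zero_le_one⟩ :
      Metric.closedBall (0 : EuclideanSpace ℝ (Fin d)) 1)⟩

end RectHelpers

section IterCollHelpers
variable [TopologicalSpace M] (R : M ≃ₜ M) {𝓔' : Set (Set M)}

theorem mem_iterColl_self {X : Set M} (h : X ∈ 𝓔') (p : ℕ) : X ∈ iterColl R 𝓔' p :=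
  ⟨0, by simp, X, h, (zpow_zero_image R X).symm⟩

theorem iterColl_mono {p q : ℕ} (h : p ≤ q) : iterColl R 𝓔' p ⊆ iterColl R 𝓔' q := by
  rintro Y ⟨k, hk, X, hX, rfl⟩
  exact ⟨k, hk.trans (by exact_mod_cast h), X, hX, rfl⟩

theorem iterColl_finite (h : 𝓔'.Finite) (p : ℕ) : (iterColl R 𝓔' p).Finite := by
  apply Set.Finite.subset (Set.Finite.image2 (fun (k : ℤ) (X : Set M) => ⇑(R.toEquiv ^ k) '' X)
    (Set.finite_Icc (-(p : ℤ)) p) h)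
  rintro Y ⟨k, hk, X, hX, rfl⟩
  exact Set.mem_image2_of_mem (a := k) (by rw [Set.mem_Icc, ← abs_le]; exact hk) hX

theorem R_image_mem_iterColl {Y : Set M} {p : ℕ} (hY : Y ∈ iterColl R 𝓔' p) :
    ⇑R '' Y ∈ iterColl R 𝓔' (p + 1) := by
  obtain ⟨k, hk, X, hX, rfl⟩ := hY
  refine ⟨k + 1, ?_, X, hX, (image_R_zpow R k X)⟩
  have h1 : |k + 1| ≤ |k| + 1 := by simpa using abs_add_le k 1
  push_cast
  calc |k + 1| ≤ |k| + 1 := h1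
    _ ≤ (p : ℤ) + 1 := by exact add_le_add_left hk 1

theorem Rsymm_image_mem_iterColl {Y : Set M} {p : ℕ} (hY : Y ∈ iterColl R 𝓔' p) :
    ⇑R.symm '' Y ∈ iterColl R 𝓔' (p + 1) := by
  obtain ⟨k, hk, X, hX, rfl⟩ := hY
  refine ⟨k - 1, ?_, X, hX, (image_Rsymm_zpow R k X)⟩
  have h1 : |k - 1| ≤ |k| + 1 := by
    rw [sub_eq_add_neg]
    simpa using abs_add_le k (-1)
  push_cast
  calc |k - 1| ≤ |k| + 1 := h1
    _ ≤ (p : ℤ) + 1 := by exact add_le_add_left hk 1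

theorem iterColl_props {d : ℕ} (hrect : ∀ X ∈ 𝓔', IsRectangle d X) {Y : Set M} {p : ℕ}
    (hY : Y ∈ iterColl R 𝓔' p) : IsCompact Y ∧ IsPreconnected Y ∧ Y.Nonempty := by
  obtain ⟨k, hk, X, hX, rfl⟩ := hY
  obtain ⟨h1, h2, h3⟩ := (hrect X hX).props
  exact ⟨h1.image (zpow_continuous R k), h2.image _ (zpow_continuous R k).continuousOn,
    h3.image _⟩

theorem iterColl_disjoint_or_eq {n : ℕ} (hIter : IterableColl R 𝓔' (n + 1)) {p q : ℕ}
    (hp : p ≤ n + 1) (hq : q ≤ n + 1) {Y Y' : Set M}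
    (hY : Y ∈ iterColl R 𝓔' p) (hY' : Y' ∈ iterColl R 𝓔' q) : Y = Y' ∨ Disjoint Y Y' := by
  obtain ⟨k, hk, X, hX, rfl⟩ := hY
  obtain ⟨l, hl, X', hX', rfl⟩ := hY'
  rcases hIter X hX X' hX' k l (hk.trans (by exact_mod_cast hp)) (hl.trans (by exact_mod_cast hq))
    with h | h
  · exact Or.inr h
  · exact Or.inl h

theorem eq_mem_iterColl {p : ℕ} {Y Y' : Set M} (hY : Y ∈ iterColl R 𝓔' p) (h : Y = Y') :
    Y' ∈ iterColl R 𝓔' p := h ▸ hY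

theorem nonmem_disjoint_collUnion {n : ℕ} (hIter : IterableColl R 𝓔' (n + 1)) {Y : Set M}
    (hY : Y ∈ iterColl R 𝓔' (n + 1)) (hn : Y ∉ iterColl R 𝓔' n) :
    Disjoint Y (collUnion (iterColl R 𝓔' n)) := by
  refine disjoint_sUnion_right.mpr fun t ht => ?_
  rcases iterColl_disjoint_or_eq R hIter le_rfl n.le_succ hY ht with h | h
  · exact absurd (eq_mem_iterColl R ht h.symm) hn
  · exact h

end IterCollHelpers



section PresHelpers
variable [MetricSpace M]

theorem pres_of_support_subset (f : M ≃ₜ M) (𝓒 : Set (Set M)) (hfin : 𝓒.Finite)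
    (hcpt : ∀ X ∈ 𝓒, IsCompact X) (hconn : ∀ X ∈ 𝓒, IsPreconnected X)
    (hopen : ∀ X ∈ 𝓒, ¬ IsOpen X)
    (hdisj : ∀ X ∈ 𝓒, ∀ Y ∈ 𝓒, X = Y ∨ Disjoint X Y)
    (hsupp : homeoSupport f ⊆ ⋃₀ 𝓒) :
    ∀ X ∈ 𝓒, ∀ x ∈ X, f x ∈ X := by
  intro X hX x hx
  classical
  have hWE : {y | f y ≠ y} ⊆ ⋃₀ 𝓒 := fun y hy => hsupp (subset_closure hy)
  have hfW : ∀ y, f y ≠ y → f y ∈ ⋃₀ 𝓒 := fun y hy => hWE (moved_apply_ne hy)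
  set E' : Set M := ⋃₀ (𝓒 \ {X}) with hE'def
  have hE'c : IsClosed E' := by
    rw [hE'def, sUnion_eq_biUnion]
    exact (hfin.subset diff_subset).isClosed_biUnion fun Y hY => (hcpt Y hY.1).isClosed
  have hXE' : Disjoint X E' := by
    refine disjoint_sUnion_right.mpr fun Y hY => ?_
    rcases hdisj X hX Y hY.1 with h | h
    · exact absurd h (fun hc => hY.2 (by rw [← hc]; rfl))
    · exact h
  have hcover : ∀ y ∈ X, f y ∈ X ∪ E' := by
    intro y hy
    by_cases hfy : f y = y
    · rw [hfy]; exact Or.inl hy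
    · rcases hfW y hfy with ⟨Y, hY, hmem⟩
      by_cases hYX : Y = X
      · exact Or.inl (hYX ▸ hmem)
      · exact Or.inr ⟨Y, ⟨hY, hYX⟩, hmem⟩
  have hXcl : IsClosed X := (hcpt X hX).isClosed
  -- a fixed point of f in X
  have hfr : ∃ z ∈ X, f z = z := by
    have h1 : (X \ interior X).Nonempty := by
      rcases eq_empty_or_nonempty (X \ interior X) with h | h
      · exfalso
        apply hopen X hX
        have hsub : X ⊆ interior X := fun y hy => by
          by_contra hc
          exact absurd (h ▸ ⟨hy, hc⟩ : y ∈ (∅ : Set M)) (notMem_empty y)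
        have : X = interior X := Subset.antisymm hsub interior_subset
        rw [this]
        exact isOpen_interior
      · exact h
    obtain ⟨z, hz1, hz2⟩ := h1
    have hzcl : z ∈ closure Xᶜ := by
      rw [closure_compl]
      exact hz2
    have hzE' : z ∈ E'ᶜ := fun hc => (disjoint_left.mp hXE') hz1 hc
    have hz3 : z ∈ closure (E'ᶜ ∩ Xᶜ) := hE'c.isOpen_compl.inter_closure ⟨hzE', hzcl⟩
    have heq : EqOn (⇑f) id (E'ᶜ ∩ Xᶜ) := by
      intro w hw
      by_contra hc
      have : w ∈ X ∪ E' := by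
        rcases hWE hc with ⟨Y, hY, hmem⟩
        by_cases hYX : Y = X
        · exact Or.inl (hYX ▸ hmem)
        · exact Or.inr ⟨Y, ⟨hY, hYX⟩, hmem⟩
      rcases this with h | h
      · exact hw.2 h
      · exact hw.1 h
    have := heq.closure f.continuous continuous_id
    exact ⟨z, hz1, this hz3⟩
  obtain ⟨z, hzX, hzfix⟩ := hfr
  obtain ⟨V₁, V₂, hV₁, hV₂, hXV₁, hE'V₂, hV₁₂⟩ :=
    SeparatedNhds.of_isCompact_isClosed (hcpt X hX) hE'c hXE'
  have hXsub : X ⊆ f ⁻¹' V₁ ∪ f ⁻¹' V₂ := by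
    intro y hy
    rcases hcover y hy with h | h
    · exact Or.inl (hXV₁ h)
    · exact Or.inr (hE'V₂ h)
  have hne : (X ∩ f ⁻¹' V₁).Nonempty :=
    ⟨z, hzX, by simp only [mem_preimage, hzfix]; exact hXV₁ hzX⟩
  have hXV := (hconn X hX).subset_left_of_subset_union (hV₁.preimage f.continuous)
    (hV₂.preimage f.continuous) (hV₁₂.preimage f) hXsub hne
  rcases hcover x hx with h | h
  · exact h
  · exact absurd rfl (hV₁₂.ne_of_mem (hXV hx) (hE'V₂ h))

theorem pres_of_support_subset₂ (f : M ≃ₜ M) (𝓒 : Set (Set M)) (hfin : 𝓒.Finite)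
    (hcpt : ∀ X ∈ 𝓒, IsCompact X) (hconn : ∀ X ∈ 𝓒, IsPreconnected X)
    (hopen : ∀ X ∈ 𝓒, ¬ IsOpen X)
    (hdisj : ∀ X ∈ 𝓒, ∀ Y ∈ 𝓒, X = Y ∨ Disjoint X Y)
    (hsupp : homeoSupport f ⊆ ⋃₀ 𝓒) :
    ∀ X ∈ 𝓒, ∀ x ∈ X, f x ∈ X ∧ f.symm x ∈ X := by
  intro X hX x hx
  refine ⟨pres_of_support_subset f 𝓒 hfin hcpt hconn hopen hdisj hsupp X hX x hx, ?_⟩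
  exact pres_of_support_subset f.symm 𝓒 hfin hcpt hconn hopen hdisj
    (by rw [homeoSupport_symm]; exact hsupp) X hX x hx

end PresHelpers

section ClopenHelpers
variable [MetricSpace M] [CompactSpace M]

/-- In a nonempty compact, locally connected metric space without isolated points,
there is a uniform positive lower bound on the diameter of nonempty clopen sets. -/
theorem exists_clopen_diam_lb [Nonempty M] [LocallyConnectedSpace M]
    (hiso : ∀ x : M, ¬ IsOpen ({x} : Set M)) :
    ∃ δ : ℝ, 0 < δ ∧ ∀ X : Set M, IsOpen X → IsClosed X → X.Nonempty →
      δ ≤ Metric.diam X := by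
  classical
  have hcover : (univ : Set M) ⊆ ⋃ x : M, connectedComponent x :=
    fun x _ => mem_iUnion.mpr ⟨x, mem_connectedComponent⟩
  obtain ⟨t, ht⟩ := isCompact_univ.elim_finite_subcover (fun x : M => connectedComponent x)
    (fun x => isOpen_connectedComponent) hcover
  have htne : t.Nonempty := by
    rcases (exists_true_iff_nonempty.mpr ‹Nonempty M›) with ⟨x, -⟩
    rcases mem_iUnion₂.mp (ht (mem_univ x)) with ⟨y, hy, _⟩
    exact ⟨y, hy⟩
  have hpos : ∀ y : M, 0 < Metric.diam (connectedComponent y) := by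
    intro y
    have : ∃ z ∈ connectedComponent y, z ≠ y := by
      by_contra hc
      push_neg at hc
      have : connectedComponent y = {y} := by
        apply Subset.antisymm
        · intro z hz; exact hc z hz
        · intro z hz; rw [hz]; exact mem_connectedComponent
      exact hiso y (this ▸ isOpen_connectedComponent)
    obtain ⟨z, hz, hzy⟩ := this
    have h1 : 0 < dist z y := dist_pos.mpr hzy
    have h2 : dist z y ≤ Metric.diam (connectedComponent y) :=
      Metric.dist_le_diam_of_mem Metric.isBounded_of_compactSpace hz mem_connectedComponent
    linarith
  refine ⟨t.inf' htne (fun y => Metric.diam (connectedComponent y)), ?_, ?_⟩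
  · rcases Finset.exists_mem_eq_inf' htne (fun y => Metric.diam (connectedComponent y))
      with ⟨y, hy, heq⟩
    rw [heq]
    exact hpos y
  · intro X hXo hXc ⟨x, hx⟩
    rcases mem_iUnion₂.mp (ht (mem_univ x)) with ⟨y, hyt, hxy⟩
    have h1 : connectedComponent y = connectedComponent x := connectedComponent_eq hxy
    have h2 : connectedComponent x ⊆ X :=
      IsClopen.connectedComponent_subset ⟨hXc, hXo⟩ hx
    calc t.inf' htne (fun y => Metric.diam (connectedComponent y))
        ≤ Metric.diam (connectedComponent y) := Finset.inf'_le _ hyt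
      _ = Metric.diam (connectedComponent x) := by rw [h1]
      _ ≤ Metric.diam X := Metric.diam_mono h2 Metric.isBounded_of_compactSpace

end ClopenHelpers



section ChartHelpers
variable {d : ℕ}

theorem no_isolated_of_charted [TopologicalSpace M]
    [ChartedSpace (EuclideanSpace ℝ (Fin d)) M] (hd : 0 < d) (x : M) :
    ¬ IsOpen ({x} : Set M) := by
  intro h
  set e := chartAt (EuclideanSpace ℝ (Fin d)) x
  have hx : x ∈ e.source := mem_chart_source _ x
  have hsub : ({x} : Set M) ⊆ e.source := by simpa using hx
  have himg : IsOpen (e '' {x}) := e.isOpen_image_of_subset_source h hsub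
  rw [image_singleton] at himg
  -- a singleton is not open in a nontrivial normed space
  obtain ⟨r, hr, hball⟩ := Metric.isOpen_iff.mp himg (e x) rfl
  set v : EuclideanSpace ℝ (Fin d) := EuclideanSpace.single ⟨0, hd⟩ (1 : ℝ)
  have hv : v ≠ 0 := by
    intro hc
    have := congrFun (congrArg (fun (w : EuclideanSpace ℝ (Fin d)) => (w : Fin d → ℝ)) hc) ⟨0, hd⟩
    simp [v, EuclideanSpace.single_apply] at this
  have hvnorm : 0 < ‖v‖ := norm_pos_iff.mpr hv
  set t : ℝ := r / (2 * ‖v‖)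
  have ht : 0 < t := div_pos hr (by positivity)
  have hmem : e x + t • v ∈ Metric.ball (e x) r := by
    rw [Metric.mem_ball, dist_eq_norm]
    have : e x + t • v - e x = t • v := by abel
    rw [this, norm_smul, Real.norm_eq_abs, abs_of_pos ht]
    rw [div_mul_eq_mul_div, mul_comm]
    rw [div_lt_iff₀ (by positivity)]
    nlinarith
  have := hball hmem
  rw [mem_singleton_iff] at this
  have : t • v = 0 := by
    have h2 := congrArg (fun w => w - e x) this
    simpa using h2
  rcases smul_eq_zero.mp this with h | h
  · exact absurd h (ne_of_gt ht)
  · exact hv h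

theorem discrete_of_charted_zero [TopologicalSpace M]
    [ChartedSpace (EuclideanSpace ℝ (Fin 0)) M] (x : M) :
    IsOpen ({x} : Set M) := by
  haveI : Subsingleton (EuclideanSpace ℝ (Fin 0)) :=
    ⟨fun a b => PiLp.ext fun i => i.elim0⟩
  set e := chartAt (EuclideanSpace ℝ (Fin 0)) x
  have hx : x ∈ e.source := mem_chart_source _ x
  have : e.source = {x} := by
    apply Subset.antisymm
    · intro y hy
      have : e y = e x := Subsingleton.elim _ _
      have := e.injOn hy hx this
      simpa using this
    · simpa using hx
  rw [← this]
  exact e.open_source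

end ChartHelpers

section UnifHelpers
variable [MetricSpace M]

theorem tendstoUniformly_of_eventually_eq {F : ℕ → M → M} {f : M → M}
    (h : ∀ᶠ n in atTop, ∀ x, F n x = f x) : TendstoUniformly F f atTop := by
  intro u hu
  filter_upwards [h] with n hn x
  rw [hn x]
  exact refl_mem_uniformity hu

end UnifHelpers



section DynHelpers
variable [TopologicalSpace M] (R : M ≃ₜ M) (Mseq : ℕ → M ≃ₜ M)

theorem psi_succ_apply (n : ℕ) (x : M) :
    Psi Mseq (n + 1) x = Mseq (n + 1) (Psi Mseq n x) := rfl

theorem psi_succ_symm_apply (n : ℕ) (x : M) :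
    (Psi Mseq (n + 1)).symm x = (Psi Mseq n).symm ((Mseq (n + 1)).symm x) := rfl

theorem gseq_apply (n : ℕ) (x : M) :
    gSeq R Mseq n x = (Psi Mseq n).symm (R (Psi Mseq n x)) := rfl

theorem gseq_symm_apply (n : ℕ) (x : M) :
    (gSeq R Mseq n).symm x = (Psi Mseq n).symm (R.symm (Psi Mseq n x)) := rfl

theorem psi_gseq (n : ℕ) (x : M) :
    Psi Mseq n (gSeq R Mseq n x) = R (Psi Mseq n x) := by
  rw [gseq_apply]
  exact (Psi Mseq n).apply_symm_apply _

theorem psi_gseq_symm (n : ℕ) (x : M) :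
    Psi Mseq n ((gSeq R Mseq n).symm x) = R.symm (Psi Mseq n x) := by
  rw [gseq_symm_apply]
  exact (Psi Mseq n).apply_symm_apply _

theorem psi_gseq_succ (m : ℕ) (x : M) :
    Psi Mseq m (gSeq R Mseq (m + 1) x) =
      (Mseq (m + 1)).symm (R (Mseq (m + 1) (Psi Mseq m x))) := by
  rw [gseq_apply, psi_succ_symm_apply, psi_succ_apply]
  exact (Psi Mseq m).apply_symm_apply _

theorem psi_gseq_succ_symm (m : ℕ) (x : M) :
    Psi Mseq m ((gSeq R Mseq (m + 1)).symm x) =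
      (Mseq (m + 1)).symm (R.symm (Mseq (m + 1) (Psi Mseq m x))) := by
  rw [gseq_symm_apply, psi_succ_symm_apply, psi_succ_apply]
  exact (Psi Mseq m).apply_symm_apply _

end DynHelpers


/-- Existence of `Ψ` and `g`. Under hypotheses `A₁`, `A₃` (with `𝓖(𝓔₀⁰)`
edgeless) and `B₁`, `B₂`, `B₃`: the `Ψₙ` converge uniformly to a continuous map `Ψ`, the `gₙ`
converge uniformly to a homeomorphism `g` (and `gₙ⁻¹ → g⁻¹` uniformly), and `R ∘ Ψ = Ψ ∘ g`. -/
theorem existence_Psi_g (d : ℕ) (M : Type*) [MetricSpace M] [CompactSpace M]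
    [ChartedSpace (EuclideanSpace ℝ (Fin d)) M]
    (R : M ≃ₜ M) (𝓔 : ℕ → Set (Set M)) (hrect : ∀ n, IsRectCollection d (𝓔 n))
    (hA1 : HypA1 R 𝓔) (hA3 : HypA3 R 𝓔) (hEdge : EdgelessGraph R (𝓔 0))
    (Mseq : ℕ → M ≃ₜ M)
    (hB1 : HypB1 R 𝓔 Mseq) (hB2 : HypB2 R 𝓔 Mseq) (hB3 : HypB3 R 𝓔 Mseq) :
    ∃ (Ψ : M → M) (g : M ≃ₜ M),
      Continuous Ψ ∧
      TendstoUniformly (fun n => ⇑(Psi Mseq n)) Ψ Filter.atTop ∧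
      TendstoUniformly (fun n => ⇑(gSeq R Mseq n)) (⇑g) Filter.atTop ∧
      TendstoUniformly (fun n => ⇑(gSeq R Mseq n).symm) (⇑g.symm) Filter.atTop ∧
      (∀ x : M, R (Ψ x) = Ψ (g x)) := by
  classical
  rcases isEmpty_or_nonempty M with hempty | hne
  · refine ⟨fun x => x, R, continuous_id, ?_, ?_, ?_, fun x => (hempty.false x).elim⟩
    · intro u hu
      exact Eventually.of_forall fun n x => (hempty.false x).elim
    · intro u hu
      exact Eventually.of_forall fun n x => (hempty.false x).elim
    · intro u hu
      exact Eventually.of_forall fun n x => (hempty.false x).elim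
  have hiterable : ∀ n, IterableColl R (𝓔 n) (n + 1) := fun n => (hA1.1 n).1
  have hnocycle : ∀ n, HasNoCycle R (iterColl R (𝓔 n) n) := fun n => (hA1.1 n).2
  have hRef := hA1.2.1
  have hComp := hA1.2.2
  rcases Nat.eq_zero_or_pos d with hd0 | hd
  · -- dimension 0 : the space is finite and discrete, everything is eventually constant
    subst hd0
    haveI : DiscreteTopology M :=
      discreteTopology_iff_isOpen_singleton.mpr (discrete_of_charted_zero (M := M))
    haveI : Finite M := finite_of_compact_of_discrete
    haveI : Fintype (Set M) := Fintype.ofFinite _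
    set N₀ : ℕ := Fintype.card (Set M) with hN₀def
    have hEempty : ∀ n, N₀ ≤ n → 𝓔 n = ∅ := by
      intro n hn
      by_contra h
      obtain ⟨X₀, hX₀⟩ := Set.nonempty_iff_ne_empty.mpr h
      have key : ∀ a b : Fin (n + 1), a < b →
          (R.toEquiv ^ (a.val : ℤ)) '' X₀ = (R.toEquiv ^ (b.val : ℤ)) '' X₀ → False := by
        intro a b hlt heq
        apply hnocycle n
        refine ⟨(R.toEquiv ^ (a.val : ℤ)) '' X₀, b.val - a.val, ?_, ?_, ?_, ?_⟩
        · refine ⟨a.val, ?_, X₀, hX₀, rfl⟩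
          have := a.isLt
          simp only [abs_of_nonneg (Int.ofNat_nonneg a.val)]
          exact_mod_cast Nat.lt_succ_iff.mp this
        · omega
        · intro i hi
          rw [← zpow_image_add]
          refine ⟨(i : ℤ) + a.val, ?_, X₀, hX₀, rfl⟩
          have hb := b.isLt
          have : ((i : ℤ) + a.val) = ((i + a.val : ℕ) : ℤ) := by push_cast; ring
          rw [this, abs_of_nonneg (Int.ofNat_nonneg _)]
          have : i + a.val ≤ n := by omega
          exact_mod_cast this
        · rw [← zpow_image_add]
          have hcast : ((b.val - a.val : ℕ) : ℤ) + (a.val : ℤ) = (b.val : ℤ) := by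
            have : a.val ≤ b.val := le_of_lt hlt
            push_cast [Nat.cast_sub this]
            ring
          rw [hcast, ← heq]
      have hcard : Fintype.card (Set M) < Fintype.card (Fin (n + 1)) := by
        rw [Fintype.card_fin]
        omega
      obtain ⟨a, b, hab, hfab⟩ := Fintype.exists_ne_map_eq_of_card_lt
        (fun k : Fin (n + 1) => (R.toEquiv ^ (k.val : ℤ)) '' X₀) hcard
      rcases lt_or_gt_of_ne hab with h | h
      · exact key a b h hfab
      · exact key b a h hfab.symm
    have hMid : ∀ n, N₀ ≤ n → ∀ x, Mseq (n + 1) x = x := by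
      intro n hn x
      apply apply_eq_of_not_mem_homeoSupport
      intro hc
      have hmem := hB1 n hc
      rw [hEempty n hn] at hmem
      obtain ⟨Y, hY, -⟩ := hmem
      obtain ⟨k, -, X, hX, -⟩ := hY
      exact hX
    have hPsiConst : ∀ m, N₀ ≤ m → ∀ x, Psi Mseq m x = Psi Mseq N₀ x := by
      intro m hm
      induction m, hm using Nat.le_induction with
      | base => intro x; rfl
      | succ m hm ih =>
          intro x
          rw [psi_succ_apply, hMid m hm, ih x]
    have hgConst : ∀ m, N₀ ≤ m → ∀ x, gSeq R Mseq m x = gSeq R Mseq N₀ x := by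
      intro m hm x
      have hsymm : ∀ y, (Psi Mseq m).symm y = (Psi Mseq N₀).symm y := by
        intro y
        apply (Psi Mseq N₀).injective
        rw [(Psi Mseq N₀).apply_symm_apply, ← hPsiConst m hm, (Psi Mseq m).apply_symm_apply]
      rw [gseq_apply, gseq_apply, hPsiConst m hm, hsymm]
    have hgSymmConst : ∀ m, N₀ ≤ m → ∀ x,
        (gSeq R Mseq m).symm x = (gSeq R Mseq N₀).symm x := by
      intro m hm x
      have hsymm : ∀ y, (Psi Mseq m).symm y = (Psi Mseq N₀).symm y := by
        intro y
        apply (Psi Mseq N₀).injective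
        rw [(Psi Mseq N₀).apply_symm_apply, ← hPsiConst m hm, (Psi Mseq m).apply_symm_apply]
      rw [gseq_symm_apply, gseq_symm_apply, hPsiConst m hm, hsymm]
    refine ⟨⇑(Psi Mseq N₀), gSeq R Mseq N₀, (Psi Mseq N₀).continuous, ?_, ?_, ?_, ?_⟩
    · apply tendstoUniformly_of_eventually_eq
      filter_upwards [eventually_ge_atTop N₀] with m hm x
      exact hPsiConst m hm x
    · apply tendstoUniformly_of_eventually_eq
      filter_upwards [eventually_ge_atTop N₀] with m hm x
      exact hgConst m hm x
    · apply tendstoUniformly_of_eventually_eq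
      filter_upwards [eventually_ge_atTop N₀] with m hm x
      exact hgSymmConst m hm x
    · intro x
      exact (psi_gseq R Mseq N₀ x).symm
  · -- main branch : d ≥ 1
    haveI : LocallyConnectedSpace M :=
      ChartedSpace.locallyConnectedSpace (H := EuclideanSpace ℝ (Fin d)) (M := M)
    obtain ⟨δ₀, hδ₀pos, hδ₀⟩ := exists_clopen_diam_lb (M := M) (no_isolated_of_charted hd)
    obtain ⟨N₁, hN₁⟩ := hA3 (δ₀ / 2) (by linarith)
    have hNotOpen : ∀ n, N₁ ≤ n → ∀ X ∈ iterColl R (𝓔 n) n, ¬ IsOpen X := by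
      intro n hn X hX hXo
      obtain ⟨hc, hp, hne'⟩ := iterColl_props R (hrect n).2.1 hX
      have h1 := hδ₀ X hXo hc.isClosed hne'
      have h2 := hN₁ n hn X hX
      linarith
    have hPres : ∀ n, N₁ ≤ n → ∀ X ∈ iterColl R (𝓔 n) n, ∀ x ∈ X,
        Mseq (n + 1) x ∈ X ∧ (Mseq (n + 1)).symm x ∈ X := by
      intro n hn
      exact pres_of_support_subset₂ (Mseq (n + 1)) (iterColl R (𝓔 n) n)
        (iterColl_finite R (hrect n).1 n)
        (fun X hX => (iterColl_props R (hrect n).2.1 hX).1)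
        (fun X hX => (iterColl_props R (hrect n).2.1 hX).2.1)
        (hNotOpen n hn)
        (fun X hX Y hY => by
          rcases iterColl_disjoint_or_eq R (hiterable n) n.le_succ n.le_succ hX hY with h | h
          exacts [Or.inl h, Or.inr h])
        (hB1 n)
    have hMoveIn : ∀ n, N₁ ≤ n → ∀ y : M, Mseq (n + 1) y ≠ y →
        ∃ X ∈ iterColl R (𝓔 n) n, y ∈ X ∧ Mseq (n + 1) y ∈ X := by
      intro n hn y hy
      obtain ⟨X, hX, hmem⟩ := hB1 n (mem_homeoSupport_of_moved hy)
      exact ⟨X, hX, hmem, (hPres n hn X hX y hmem).1⟩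
    -- invariance of a given rectangle under all later maps
    have hzinv : ∀ k, N₁ ≤ k → ∀ Z ∈ iterColl R (𝓔 k) (k + 1), ∀ j, k ≤ j →
        ∀ y : M, Mseq (j + 1) y ∈ Z ↔ y ∈ Z := by
      intro k hk Z hZ j hj y
      by_cases hmove : Mseq (j + 1) y = y
      · rw [hmove]
      · obtain ⟨Y', hY', hy1, hy2⟩ := hMoveIn j (hk.trans hj) y hmove
        have hsub : Y' ⊆ Z ∨ Disjoint Y' Z := by
          rcases eq_or_lt_of_le hj with rfl | hjk
          · rcases iterColl_disjoint_or_eq R (hiterable k) k.le_succ le_rfl hY' hZ with h | h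
            · exact Or.inl (h ▸ subset_rfl)
            · exact Or.inr h
          · rcases (hRef k j hjk).2 Z hZ Y' (iterColl_mono R j.le_succ hY') with h | h
            · exact Or.inr h.symm
            · exact Or.inl (h.trans interior_subset)
        rcases hsub with h | h
        · exact iff_of_true (h hy2) (h hy1)
        · exact iff_of_false (fun hc => disjoint_left.mp h hy2 hc)
            (fun hc => disjoint_left.mp h hy1 hc)
    have hpsitrans : ∀ k, N₁ ≤ k → ∀ Z ∈ iterColl R (𝓔 k) (k + 1), ∀ m, k ≤ m →
        ∀ x : M, (Psi Mseq m x ∈ Z ↔ Psi Mseq k x ∈ Z) := by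
      intro k hk Z hZ m hm x
      induction m, hm using Nat.le_induction with
      | base => exact Iff.rfl
      | succ m hm ih => rw [psi_succ_apply, hzinv k hk Z hZ m hm, ih]
    -- uniform Cauchy property for Psi
    have hpsicauchy : ∀ ε : ℝ, 0 < ε → ∃ N, ∀ n, N ≤ n → ∀ m, n ≤ m → ∀ x : M,
        dist (Psi Mseq m x) (Psi Mseq n x) ≤ ε := by
      intro ε hε
      obtain ⟨N₂, hN₂⟩ := hA3 ε hε
      refine ⟨max N₁ N₂, fun n hn m hm x => ?_⟩
      have hn1 : N₁ ≤ n := le_trans (le_max_left _ _) hn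
      have hn2 : N₂ ≤ n := le_trans (le_max_right _ _) hn
      have key : ∀ m', n ≤ m' → Psi Mseq m' x = Psi Mseq n x ∨
          ∃ k, n ≤ k ∧ k ≤ m' ∧ ∃ Y ∈ iterColl R (𝓔 k) k,
            Psi Mseq n x ∈ Y ∧ Psi Mseq m' x ∈ Y := by
        intro m' hm'
        induction m', hm' using Nat.le_induction with
        | base => exact Or.inl rfl
        | succ m' hm' ih =>
            by_cases hmove : Mseq (m' + 1) (Psi Mseq m' x) = Psi Mseq m' x
            · rw [psi_succ_apply, hmove]
              rcases ih with h | ⟨k, hk1, hk2, Y, hY, hY1, hY2⟩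
              · exact Or.inl h
              · exact Or.inr ⟨k, hk1, hk2.trans m'.le_succ, Y, hY, hY1, hY2⟩
            · obtain ⟨Y', hY', h1, h2⟩ := hMoveIn m' (hn1.trans hm') _ hmove
              rcases ih with heq | ⟨k, hk1, hk2, Y, hY, hY1, hY2⟩
              · refine Or.inr ⟨m', hm', m'.le_succ, Y', hY', ?_, ?_⟩
                · rw [← heq]; exact h1
                · rw [psi_succ_apply]; exact h2
              · have hsub : Y' ⊆ Y := by
                  rcases eq_or_lt_of_le hk2 with rfl | hlt
                  · rcases iterColl_disjoint_or_eq R (hiterable k) k.le_succ k.le_succ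
                        hY' hY with h | h
                    · exact h ▸ subset_rfl
                    · exact absurd hY2 (disjoint_left.mp h h1)
                  · rcases (hRef k m' hlt).2 Y (iterColl_mono R k.le_succ hY) Y'
                        (iterColl_mono R m'.le_succ hY') with h | h
                    · exact absurd h1 (disjoint_left.mp h hY2)
                    · exact h.trans interior_subset
                refine Or.inr ⟨k, hk1, hk2.trans m'.le_succ, Y, hY, hY1, ?_⟩
                rw [psi_succ_apply]
                exact hsub h2
      rcases key m hm with heq | ⟨k, hk1, hk2, Y, hY, hY1, hY2⟩
      · rw [heq]; simp [hε.le]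
      · calc dist (Psi Mseq m x) (Psi Mseq n x) ≤ Metric.diam Y :=
            Metric.dist_le_diam_of_mem Metric.isBounded_of_compactSpace hY2 hY1
          _ ≤ ε := hN₂ k (hn2.trans hk1) Y hY
    -- the limit map Ψ
    have hPsiEx : ∀ x : M, ∃ y : M, Tendsto (fun n => Psi Mseq n x) atTop (𝓝 y) := by
      intro x
      apply cauchySeq_tendsto_of_complete
      rw [Metric.cauchySeq_iff']
      intro ε hε
      obtain ⟨N, hN⟩ := hpsicauchy (ε / 2) (by linarith)
      exact ⟨N, fun n hn => lt_of_le_of_lt (hN N le_rfl n hn x) (by linarith)⟩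
    choose Ψ hΨlim using hPsiEx
    have hΨunif : TendstoUniformly (fun n => ⇑(Psi Mseq n)) Ψ atTop := by
      rw [Metric.tendstoUniformly_iff]
      intro ε hε
      obtain ⟨N, hN⟩ := hpsicauchy (ε / 2) (by linarith)
      filter_upwards [eventually_ge_atTop N] with n hn x
      have hle : dist (Ψ x) (Psi Mseq n x) ≤ ε / 2 := by
        apply le_of_tendsto ((hΨlim x).dist (tendsto_const_nhds (x := Psi Mseq n x)))
        filter_upwards [eventually_ge_atTop n] with m hm
        exact hN n hn m hm x
      linarith
    have hΨcont : Continuous Ψ :=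
      hΨunif.continuous (Eventually.of_forall fun n => (Psi Mseq n).continuous).frequently
    -- fixed points of maps away from their support
    have hfix : ∀ m : ℕ, ∀ Z : Set M, Disjoint Z (collUnion (iterColl R (𝓔 m) m)) →
        ∀ z ∈ Z, Mseq (m + 1) z = z ∧ (Mseq (m + 1)).symm z = z := by
      intro m Z hdis z hz
      constructor
      · apply apply_eq_of_not_mem_homeoSupport
        intro hc
        exact disjoint_left.mp hdis hz (hB1 m hc)
      · apply symm_apply_eq_of_not_mem_homeoSupport
        intro hc
        exact disjoint_left.mp hdis hz (hB1 m hc)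
    -- one-step comparison for g
    have hgstep : ∀ m, N₁ ≤ m → 1 ≤ m → ∀ x : M,
        gSeq R Mseq (m + 1) x = gSeq R Mseq m x ∨
        ∃ Z, Z ∈ iterColl R (𝓔 m) (m + 1) ∧ Z ∉ iterColl R (𝓔 m) (m - 1) ∧
          Psi Mseq m (gSeq R Mseq m x) ∈ Z ∧ Psi Mseq m (gSeq R Mseq (m + 1) x) ∈ Z := by
      intro m hm hm1 x
      by_cases hyE : ∃ X ∈ iterColl R (𝓔 m) m, Psi Mseq m x ∈ X
      · obtain ⟨X, hX, hyX⟩ := hyE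
        by_cases hRX : (⇑R) '' X ∈ iterColl R (𝓔 m) m
        · left
          have hcomm := hB2 m X hX hRX (Psi Mseq m x) hyX
          apply (Psi Mseq m).injective
          rw [psi_gseq_succ, psi_gseq, ← hcomm, (Mseq (m + 1)).symm_apply_apply]
        · right
          have hRXmem : (⇑R) '' X ∈ iterColl R (𝓔 m) (m + 1) := R_image_mem_iterColl R hX
          have hdisE := nonmem_disjoint_collUnion R (hiterable m) hRXmem hRX
          have hMy : Mseq (m + 1) (Psi Mseq m x) ∈ X := (hPres m hm X hX _ hyX).1
          have h1 : R (Mseq (m + 1) (Psi Mseq m x)) ∈ (⇑R) '' X := mem_image_of_mem _ hMy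
          refine ⟨(⇑R) '' X, hRXmem, fun hc => hRX (iterColl_mono R (Nat.sub_le m 1) hc), ?_, ?_⟩
          · rw [psi_gseq]
            exact mem_image_of_mem _ hyX
          · rw [psi_gseq_succ, (hfix m _ hdisE _ h1).2]
            exact h1
      · push_neg at hyE
        have hyNE : Psi Mseq m x ∉ collUnion (iterColl R (𝓔 m) m) := by
          intro hc
          obtain ⟨X, hX, hmem⟩ := hc
          exact hyE X hX hmem
        have hyfix : Mseq (m + 1) (Psi Mseq m x) = Psi Mseq m x := by
          apply apply_eq_of_not_mem_homeoSupport
          exact fun hc => hyNE (hB1 m hc)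
        by_cases hRyE : ∃ X ∈ iterColl R (𝓔 m) m, R (Psi Mseq m x) ∈ X
        · obtain ⟨X'', hX'', hmem⟩ := hRyE
          right
          have hnot : X'' ∉ iterColl R (𝓔 m) (m - 1) := by
            rintro ⟨k, hk, X₀, hX₀, rfl⟩
            have hcast : ((m - 1 : ℕ) : ℤ) = (m : ℤ) - 1 := by
              rw [Nat.cast_sub hm1]; rfl
            have h1 : ⇑R.symm '' ((R.toEquiv ^ k) '' X₀) ∈ iterColl R (𝓔 m) m := by
              rw [image_Rsymm_zpow]
              refine ⟨k - 1, ?_, X₀, hX₀, rfl⟩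
              have h2 : |k - 1| ≤ |k| + 1 := by
                rw [sub_eq_add_neg]
                simpa using abs_add_le k (-1)
              rw [hcast] at hk
              omega
            have h2 : Psi Mseq m x ∈ ⇑R.symm '' ((R.toEquiv ^ k) '' X₀) :=
              ⟨R (Psi Mseq m x), hmem, R.symm_apply_apply _⟩
            exact hyE _ h1 h2
          refine ⟨X'', iterColl_mono R m.le_succ hX'', hnot, ?_, ?_⟩
          · rw [psi_gseq]
            exact hmem
          · rw [psi_gseq_succ, hyfix]
            exact (hPres m hm X'' hX'' _ hmem).2
        · left
          push_neg at hRyE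
          have hRyNE : R (Psi Mseq m x) ∉ collUnion (iterColl R (𝓔 m) m) := by
            intro hc
            obtain ⟨X, hX, hmem⟩ := hc
            exact hRyE X hX hmem
          have hRyfix : (Mseq (m + 1)).symm (R (Psi Mseq m x)) = R (Psi Mseq m x) := by
            apply symm_apply_eq_of_not_mem_homeoSupport
            exact fun hc => hRyNE (hB1 m hc)
          apply (Psi Mseq m).injective
          rw [psi_gseq_succ, psi_gseq, hyfix, hRyfix]
    -- one-step comparison for g⁻¹
    have hgstepsymm : ∀ m, N₁ ≤ m → 1 ≤ m → ∀ x : M,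
        (gSeq R Mseq (m + 1)).symm x = (gSeq R Mseq m).symm x ∨
        ∃ Z, Z ∈ iterColl R (𝓔 m) (m + 1) ∧ Z ∉ iterColl R (𝓔 m) (m - 1) ∧
          Psi Mseq m ((gSeq R Mseq m).symm x) ∈ Z ∧
          Psi Mseq m ((gSeq R Mseq (m + 1)).symm x) ∈ Z := by
      intro m hm hm1 x
      by_cases hyE : ∃ X ∈ iterColl R (𝓔 m) m, Psi Mseq m x ∈ X
      · obtain ⟨X, hX, hyX⟩ := hyE
        by_cases hRX : (⇑R.symm) '' X ∈ iterColl R (𝓔 m) m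
        · left
          have hRRX : (⇑R) '' ((⇑R.symm) '' X) ∈ iterColl R (𝓔 m) m := by
            have : (⇑R) '' ((⇑R.symm) '' X) = X := by
              rw [← image_comp]
              simp
            rw [this]
            exact hX
          have hcomm := hB2 m _ hRX hRRX (R.symm (Psi Mseq m x)) (mem_image_of_mem _ hyX)
          rw [R.apply_symm_apply] at hcomm
          apply (Psi Mseq m).injective
          rw [psi_gseq_succ_symm, psi_gseq_symm, hcomm, R.symm_apply_apply,
            (Mseq (m + 1)).symm_apply_apply]
        · right
          have hRXmem : (⇑R.symm) '' X ∈ iterColl R (𝓔 m) (m + 1) :=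
            Rsymm_image_mem_iterColl R hX
          have hdisE := nonmem_disjoint_collUnion R (hiterable m) hRXmem hRX
          have hMy : Mseq (m + 1) (Psi Mseq m x) ∈ X := (hPres m hm X hX _ hyX).1
          have h1 : R.symm (Mseq (m + 1) (Psi Mseq m x)) ∈ (⇑R.symm) '' X :=
            mem_image_of_mem _ hMy
          refine ⟨(⇑R.symm) '' X, hRXmem,
            fun hc => hRX (iterColl_mono R (Nat.sub_le m 1) hc), ?_, ?_⟩
          · rw [psi_gseq_symm]
            exact mem_image_of_mem _ hyX
          · rw [psi_gseq_succ_symm, (hfix m _ hdisE _ h1).2]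
            exact h1
      · push_neg at hyE
        have hyNE : Psi Mseq m x ∉ collUnion (iterColl R (𝓔 m) m) := by
          intro hc
          obtain ⟨X, hX, hmem⟩ := hc
          exact hyE X hX hmem
        have hyfix : Mseq (m + 1) (Psi Mseq m x) = Psi Mseq m x := by
          apply apply_eq_of_not_mem_homeoSupport
          exact fun hc => hyNE (hB1 m hc)
        by_cases hRyE : ∃ X ∈ iterColl R (𝓔 m) m, R.symm (Psi Mseq m x) ∈ X
        · obtain ⟨X'', hX'', hmem⟩ := hRyE
          right
          have hnot : X'' ∉ iterColl R (𝓔 m) (m - 1) := by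
            rintro ⟨k, hk, X₀, hX₀, rfl⟩
            have hcast : ((m - 1 : ℕ) : ℤ) = (m : ℤ) - 1 := by
              rw [Nat.cast_sub hm1]; rfl
            have h1 : ⇑R '' ((R.toEquiv ^ k) '' X₀) ∈ iterColl R (𝓔 m) m := by
              rw [image_R_zpow]
              refine ⟨k + 1, ?_, X₀, hX₀, rfl⟩
              have h2 : |k + 1| ≤ |k| + 1 := by simpa using abs_add_le k 1
              rw [hcast] at hk
              omega
            have h2 : Psi Mseq m x ∈ ⇑R '' ((R.toEquiv ^ k) '' X₀) :=
              ⟨R.symm (Psi Mseq m x), hmem, R.apply_symm_apply _⟩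
            exact hyE _ h1 h2
          refine ⟨X'', iterColl_mono R m.le_succ hX'', hnot, ?_, ?_⟩
          · rw [psi_gseq_symm]
            exact hmem
          · rw [psi_gseq_succ_symm, hyfix]
            exact (hPres m hm X'' hX'' _ hmem).2
        · left
          push_neg at hRyE
          have hRyNE : R.symm (Psi Mseq m x) ∉ collUnion (iterColl R (𝓔 m) m) := by
            intro hc
            obtain ⟨X, hX, hmem⟩ := hc
            exact hRyE X hX hmem
          have hRyfix : (Mseq (m + 1)).symm (R.symm (Psi Mseq m x)) = R.symm (Psi Mseq m x) := by
            apply symm_apply_eq_of_not_mem_homeoSupport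
            exact fun hc => hRyNE (hB1 m hc)
          apply (Psi Mseq m).injective
          rw [psi_gseq_succ_symm, psi_gseq_symm, hyfix, hRyfix]
    -- new rectangles at level k are disjoint from the support region of level k - 1
    have hdisjlow : ∀ k, 1 ≤ k → ∀ Z, Z ∈ iterColl R (𝓔 k) (k + 1) →
        Z ∉ iterColl R (𝓔 k) (k - 1) →
        Disjoint Z (collUnion (iterColl R (𝓔 (k - 1)) (k - 1))) := by
      intro k hk Z hZ hZn
      rw [disjoint_left]
      intro z hzZ hzE
      obtain ⟨W, hW, hzW⟩ := hzE
      obtain ⟨j, hj, X₁, hX₁, rfl⟩ := hW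
      obtain ⟨c, hc, X₀, hX₀, rfl⟩ := hZ
      have hk1 : k - 1 + 1 = k := Nat.succ_pred_eq_of_pos hk
      have hcomp := hComp (k - 1)
      rw [hk1] at hcomp
      have hbound : |c - j| ≤ 2 * (k : ℤ) + 1 := by
        have h2 : |c - j| ≤ |c| + |j| := by
          rw [sub_eq_add_neg]
          simpa using abs_add_le c (-j)
        omega
      set w := (R.toEquiv ^ (-j)) z with hwdef
      have hwX₁ : w ∈ X₁ := by
        obtain ⟨a, ha, rfl⟩ := hzW
        rw [hwdef, ← Equiv.Perm.mul_apply, ← zpow_add, neg_add_cancel, zpow_zero]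
        simpa using ha
      have hwZ : w ∈ (R.toEquiv ^ (c - j)) '' (collUnion (𝓔 k)) := by
        have h1 : w ∈ (R.toEquiv ^ (-j)) '' ((R.toEquiv ^ c) '' X₀) :=
          mem_image_of_mem _ hzZ
        rw [← zpow_image_add] at h1
        have h2 : (R.toEquiv ^ (-j + c)) '' X₀ ⊆ (R.toEquiv ^ (-j + c)) '' (collUnion (𝓔 k)) :=
          image_mono (fun t ht => ⟨X₀, hX₀, ht⟩)
        rw [show c - j = -j + c by ring]
        exact h2 h1
      have hwE : w ∈ collUnion (𝓔 k) := by
        apply hcomp.2 (c - j) hbound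
        exact ⟨hwZ, ⟨X₁, hX₁, hwX₁⟩⟩
      obtain ⟨X₂, hX₂, hwX₂⟩ := hwE
      have hzX₂ : z ∈ (R.toEquiv ^ j) '' X₂ := by
        refine ⟨w, hwX₂, ?_⟩
        rw [hwdef, ← Equiv.Perm.mul_apply, ← zpow_add, add_neg_cancel, zpow_zero]
        rfl
      have hmem2 : (R.toEquiv ^ j) '' X₂ ∈ iterColl R (𝓔 k) (k - 1) := ⟨j, hj, X₂, hX₂, rfl⟩
      rcases iterColl_disjoint_or_eq R (hiterable k) le_rfl
          (le_trans (Nat.sub_le k 1) k.le_succ) (⟨c, hc, X₀, hX₀, rfl⟩ :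
            (R.toEquiv ^ c) '' X₀ ∈ iterColl R (𝓔 k) (k + 1)) hmem2 with h | h
      · exact hZn (h ▸ hmem2)
      · exact disjoint_left.mp h hzZ hzX₂
    -- transfer of preimages down one level
    have hpsipreim : ∀ k, 1 ≤ k → ∀ Z, Z ∈ iterColl R (𝓔 k) (k + 1) →
        Z ∉ iterColl R (𝓔 k) (k - 1) →
        ∀ w : M, (Psi Mseq k w ∈ Z ↔ Psi Mseq (k - 1) w ∈ Z) := by
      intro k hk Z hZ hZn w
      have hdis := hdisjlow k hk Z hZ hZn
      have hk1 : k - 1 + 1 = k := Nat.succ_pred_eq_of_pos hk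
      have hstep : Psi Mseq k w = Mseq k (Psi Mseq (k - 1) w) := by
        have h1 := psi_succ_apply Mseq (k - 1) w
        rw [hk1] at h1
        exact h1
      rw [hstep]
      by_cases hmv : Mseq k (Psi Mseq (k - 1) w) = Psi Mseq (k - 1) w
      · rw [hmv]
      · have hsupp : homeoSupport (Mseq k) ⊆ collUnion (iterColl R (𝓔 (k - 1)) (k - 1)) := by
          have h1 := hB1 (k - 1)
          rw [hk1] at h1
          exact h1
        have hmv' : Mseq k (Mseq k (Psi Mseq (k - 1) w)) ≠ Mseq k (Psi Mseq (k - 1) w) := by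
          have h := moved_apply_ne (f := Mseq k) hmv
          exact h
        constructor
        · intro hcon
          exact absurd (hsupp (mem_homeoSupport_of_moved hmv'))
            (fun hc => disjoint_left.mp hdis hcon hc)
        · intro hcon
          exact absurd (hsupp (mem_homeoSupport_of_moved hmv))
            (fun hc => disjoint_left.mp hdis hcon hc)
    -- the trapping argument
    have htrap : ∀ ε : ℝ, 0 < ε → ∃ N, ∀ u : ℕ → M, ∀ n, N ≤ n →
        (∀ m, n ≤ m → u (m + 1) = u m ∨ ∃ Z, Z ∈ iterColl R (𝓔 m) (m + 1) ∧
          Z ∉ iterColl R (𝓔 m) (m - 1) ∧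
          Psi Mseq m (u m) ∈ Z ∧ Psi Mseq m (u (m + 1)) ∈ Z) →
        ∀ m, n ≤ m → dist (u m) (u n) ≤ ε := by
      intro ε hε
      obtain ⟨N₃, hN₃⟩ := hB3 ε hε
      refine ⟨max N₁ (N₃ + 1), fun u n hn hstep m hm => ?_⟩
      have hn1 : N₁ ≤ n := le_trans (le_max_left _ _) hn
      have hn3 : N₃ + 1 ≤ n := le_trans (le_max_right _ _) hn
      have key : ∀ m', n ≤ m' → u m' = u n ∨ ∃ k, n ≤ k ∧ k ≤ m' ∧ ∃ Z,
          Z ∈ iterColl R (𝓔 k) (k + 1) ∧ Z ∉ iterColl R (𝓔 k) (k - 1) ∧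
          Psi Mseq k (u n) ∈ Z ∧ Psi Mseq k (u m') ∈ Z := by
        intro m' hm'
        induction m', hm' using Nat.le_induction with
        | base => exact Or.inl rfl
        | succ m' hm' ih =>
            rcases hstep m' hm' with heq | ⟨Z'', hZ''1, hZ''2, hp1, hp2⟩
            · rcases ih with h | ⟨k, h1, h2, Z, h3, h4, h5, h6⟩
              · exact Or.inl (heq.trans h)
              · exact Or.inr ⟨k, h1, h2.trans m'.le_succ, Z, h3, h4, h5, by rw [heq]; exact h6⟩
            · rcases ih with h | ⟨k, h1, h2, Z, h3, h4, h5, h6⟩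
              · refine Or.inr ⟨m', hm', m'.le_succ, Z'', hZ''1, hZ''2, ?_, hp2⟩
                rw [← h]
                exact hp1
              · have hup : Psi Mseq m' (u m') ∈ Z :=
                  (hpsitrans k (le_trans hn1 h1) Z h3 m' h2 (u m')).mpr h6
                have hZsub : Z'' ⊆ Z := by
                  rcases eq_or_lt_of_le h2 with rfl | hlt
                  · rcases iterColl_disjoint_or_eq R (hiterable k) le_rfl le_rfl
                        hZ''1 h3 with he | hd
                    · exact he ▸ subset_rfl
                    · exact absurd hup (disjoint_left.mp hd hp1)
                  · rcases (hRef k m' hlt).2 Z h3 Z'' hZ''1 with hd | hs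
                    · exact absurd hp1 (disjoint_left.mp hd hup)
                    · exact hs.trans interior_subset
                have h6' : Psi Mseq k (u (m' + 1)) ∈ Z :=
                  (hpsitrans k (le_trans hn1 h1) Z h3 m' h2 (u (m' + 1))).mp (hZsub hp2)
                exact Or.inr ⟨k, h1, h2.trans m'.le_succ, Z, h3, h4, h5, h6'⟩
      rcases key m hm with h | ⟨k, h1, h2, Z, h3, h4, h5, h6⟩
      · rw [h]; simp [hε.le]
      · have hk1 : 1 ≤ k := by omega
        have hlow := hpsipreim k hk1 Z h3 h4
        have hdiam : Metric.diam (⇑(Psi Mseq (k - 1)) ⁻¹' Z) ≤ ε := by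
          have e1 : k - 1 + 1 = k := by omega
          have e2 : k - 1 + 2 = k + 1 := by omega
          apply hN₃ (k - 1) (by omega) Z
          rw [mem_diff, e1, e2]
          exact ⟨h3, h4⟩
        calc dist (u m) (u n) ≤ Metric.diam (⇑(Psi Mseq (k - 1)) ⁻¹' Z) := by
              apply Metric.dist_le_diam_of_mem Metric.isBounded_of_compactSpace
              · exact (hlow (u m)).mp h6
              · exact (hlow (u n)).mp h5
          _ ≤ ε := hdiam
    -- uniform Cauchy property for g and g⁻¹
    have hgcauchy : ∀ ε : ℝ, 0 < ε → ∃ N, ∀ n, N ≤ n → ∀ m, n ≤ m → ∀ x : M,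
        dist (gSeq R Mseq m x) (gSeq R Mseq n x) ≤ ε ∧
        dist ((gSeq R Mseq m).symm x) ((gSeq R Mseq n).symm x) ≤ ε := by
      intro ε hε
      obtain ⟨N', hN'⟩ := htrap ε hε
      refine ⟨max N' (max N₁ 1), fun n hn m hm x => ?_⟩
      have hn' : N' ≤ n := le_trans (le_max_left _ _) hn
      have hn1 : N₁ ≤ n := le_trans ((le_max_left _ _).trans (le_max_right _ _)) hn
      have hn2 : 1 ≤ n := le_trans ((le_max_right _ _).trans (le_max_right _ _)) hn
      constructor
      · exact hN' (fun j => gSeq R Mseq j x) n hn'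
          (fun m' hm' => hgstep m' (hn1.trans hm') (hn2.trans hm') x) m hm
      · exact hN' (fun j => (gSeq R Mseq j).symm x) n hn'
          (fun m' hm' => hgstepsymm m' (hn1.trans hm') (hn2.trans hm') x) m hm
    -- limits of g and g⁻¹
    have hGEx : ∀ x : M, ∃ y : M, Tendsto (fun n => gSeq R Mseq n x) atTop (𝓝 y) := by
      intro x
      apply cauchySeq_tendsto_of_complete
      rw [Metric.cauchySeq_iff']
      intro ε hε
      obtain ⟨N, hN⟩ := hgcauchy (ε / 2) (by linarith)
      exact ⟨N, fun n hn => lt_of_le_of_lt (hN N le_rfl n hn x).1 (by linarith)⟩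
    have hGiEx : ∀ x : M, ∃ y : M, Tendsto (fun n => (gSeq R Mseq n).symm x) atTop (𝓝 y) := by
      intro x
      apply cauchySeq_tendsto_of_complete
      rw [Metric.cauchySeq_iff']
      intro ε hε
      obtain ⟨N, hN⟩ := hgcauchy (ε / 2) (by linarith)
      exact ⟨N, fun n hn => lt_of_le_of_lt (hN N le_rfl n hn x).2 (by linarith)⟩
    choose G hGlim using hGEx
    choose Gi hGilim using hGiEx
    have hGunif : TendstoUniformly (fun n => ⇑(gSeq R Mseq n)) G atTop := by
      rw [Metric.tendstoUniformly_iff]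
      intro ε hε
      obtain ⟨N, hN⟩ := hgcauchy (ε / 2) (by linarith)
      filter_upwards [eventually_ge_atTop N] with n hn x
      have hle : dist (G x) (gSeq R Mseq n x) ≤ ε / 2 := by
        apply le_of_tendsto ((hGlim x).dist (tendsto_const_nhds (x := gSeq R Mseq n x)))
        filter_upwards [eventually_ge_atTop n] with m hm
        exact (hN n hn m hm x).1
      linarith
    have hGiunif : TendstoUniformly (fun n => ⇑(gSeq R Mseq n).symm) Gi atTop := by
      rw [Metric.tendstoUniformly_iff]
      intro ε hε
      obtain ⟨N, hN⟩ := hgcauchy (ε / 2) (by linarith)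
      filter_upwards [eventually_ge_atTop N] with n hn x
      have hle : dist (Gi x) ((gSeq R Mseq n).symm x) ≤ ε / 2 := by
        apply le_of_tendsto ((hGilim x).dist (tendsto_const_nhds (x := (gSeq R Mseq n).symm x)))
        filter_upwards [eventually_ge_atTop n] with m hm
        exact (hN n hn m hm x).2
      linarith
    have hGcont : Continuous G :=
      hGunif.continuous (Eventually.of_forall fun n => (gSeq R Mseq n).continuous).frequently
    have hGicont : Continuous Gi :=
      hGiunif.continuous (Eventually.of_forall fun n => (gSeq R Mseq n).symm.continuous).frequently
    have hGGi : ∀ x : M, G (Gi x) = x := by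
      intro x
      have h1 : Tendsto (fun n => gSeq R Mseq n ((gSeq R Mseq n).symm x)) atTop
          (𝓝 (G (Gi x))) := hGunif.tendsto_comp hGcont.continuousAt (hGilim x)
      have h2 : (fun n => gSeq R Mseq n ((gSeq R Mseq n).symm x)) = fun _ => x :=
        funext fun n => (gSeq R Mseq n).apply_symm_apply x
      rw [h2] at h1
      exact tendsto_nhds_unique h1 tendsto_const_nhds
    have hGiG : ∀ x : M, Gi (G x) = x := by
      intro x
      have h1 : Tendsto (fun n => (gSeq R Mseq n).symm (gSeq R Mseq n x)) atTop
          (𝓝 (Gi (G x))) := hGiunif.tendsto_comp hGicont.continuousAt (hGlim x)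
      have h2 : (fun n => (gSeq R Mseq n).symm (gSeq R Mseq n x)) = fun _ => x :=
        funext fun n => (gSeq R Mseq n).symm_apply_apply x
      rw [h2] at h1
      exact tendsto_nhds_unique h1 tendsto_const_nhds
    set g : M ≃ₜ M :=
      { toFun := G
        invFun := Gi
        left_inv := hGiG
        right_inv := hGGi
        continuous_toFun := hGcont
        continuous_invFun := hGicont } with hgdef
    have hsemi : ∀ x : M, R (Ψ x) = Ψ (g x) := by
      intro x
      have h1 : Tendsto (fun n => R (Psi Mseq n x)) atTop (𝓝 (R (Ψ x))) :=
        (R.continuous.tendsto _).comp (hΨlim x)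
      have h2 : Tendsto (fun n => Psi Mseq n (gSeq R Mseq n x)) atTop (𝓝 (Ψ (G x))) :=
        hΨunif.tendsto_comp hΨcont.continuousAt (hGlim x)
      have h3 : (fun n => Psi Mseq n (gSeq R Mseq n x)) = fun n => R (Psi Mseq n x) :=
        funext fun n => psi_gseq R Mseq n x
      rw [h3] at h2
      exact tendsto_nhds_unique h1 h2
    exact ⟨Ψ, g, hΨcont, hΨunif, hGunif, hGiunif, hsemi⟩

end
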